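/- arXiv:1803.10544 — 2 statements merged into one kernel-verified Lean document; each statement's English description precedes it below -/
import Mathlib

section
/- Fix r, s > 0. For all f, g ∈ C^{1,r,s}(ℝ), the limit lim_{μ→∞} V_μ(f,g) exists and equals (1/2)·V_0(f,g), i.e. lim_{μ→∞} V_μ(f,g) = (1/(4π²)) ∬_{ℝ²} (f(x)−f(y))(g(x)−g(y))/(x−y)² dx dy. -/
open MeasureTheory ProbabilityTheory Filter Topology
open scoped ENNReal NNReal BigOperators

noncomputable section

/-- Trace of `f` applied to a Hermitian matrix, via the spectral functional calculus. -/
def trFun {N : ℕ} (M : Matrix (Fin N) (Fin N) ℂ) (f : ℝ → ℝ) : ℝ :=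
  if h : M.IsHermitian then ∑ i, f (h.eigenvalues i) else 0

/-- The semicircle density `ρ(x) = (1/2π) √((4 − x²)₊)`. -/
def semicircle (x : ℝ) : ℝ := (1 / (2 * Real.pi)) * Real.sqrt (max (4 - x ^ 2) 0)

/-- The mesoscopic linear statistic `Ẑ(f) = tr f((H−E)/η) − N ∫ ρ(x) f((x−E)/η) dx`. -/
def Zhat {N : ℕ} (M : Matrix (Fin N) (Fin N) ℂ) (E₀ η : ℝ) (f : ℝ → ℝ) : ℝ :=
  trFun M (fun x => f ((x - E₀) / η)) -
    N * ∫ x in (-2 : ℝ)..2, semicircle x * f ((x - E₀) / η)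

/-- The covariance `V_μ(f,g)` for finite `μ ≥ 0`. -/
def Vmu (μ : ℝ) (f g : ℝ → ℝ) : ℝ :=
  (1 / (4 * Real.pi ^ 2)) * ∫ q : ℝ × ℝ,
    (f q.1 - f q.2) * (g q.1 - g q.2) *
      (1 / (q.1 - q.2) ^ 2 + ((q.1 - q.2) ^ 2 - μ ^ 2) / ((q.1 - q.2) ^ 2 + μ ^ 2) ^ 2)

/-- The covariance `V_∞(f,g)`. -/
def Vinf (f g : ℝ → ℝ) : ℝ :=
  (1 / (4 * Real.pi ^ 2)) * ∫ q : ℝ × ℝ,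
    (f q.1 - f q.2) * (g q.1 - g q.2) / (q.1 - q.2) ^ 2

/-- The covariance `V_μ(f,g)` for `μ ∈ [0,∞]`. -/
def VmuE (μ : ℝ≥0∞) (f g : ℝ → ℝ) : ℝ :=
  if μ = ⊤ then Vinf f g else Vmu μ.toReal f g

/-- The class `C^{1,r,s}(ℝ)`. -/
structure MemC1rs (r s : ℝ) (f : ℝ → ℝ) : Prop where
  c1 : ContDiff ℝ 1 f
  holder : ∃ K : ℝ, ∀ x y : ℝ, |deriv f x - deriv f y| ≤ K * |x - y| ^ r
  decay : ∃ C : ℝ, ∀ x : ℝ, |f x| + |deriv f x| ≤ C * (1 + |x|) ^ (-(1 + s))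

/-- Basic structural conditions of a Wigner matrix with parameter `σ`. -/
structure IsWignerBase {Ω : Type} [MeasurableSpace Ω] (P : Measure Ω) (N : ℕ)
    (H : Ω → Matrix (Fin N) (Fin N) ℂ) (σ : ℝ) : Prop where
  herm : ∀ ω, (H ω).IsHermitian
  meas : ∀ i j, Measurable fun ω => H ω i j
  indep : iIndepFun
    (fun (q : {q : Fin N × Fin N // q.1 ≤ q.2}) ω => H ω q.1.1 q.1.2) P
  centered : ∀ i j, (∫ ω, H ω i j ∂P) = 0
  sq_int : ∀ i j, MemLp (fun ω => H ω i j) 2 P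
  variance : ∀ i j, i ≠ j → (∫ ω, ‖H ω i j‖ ^ 2 ∂P) = 1 / (N : ℝ)
  sigma2 : ∀ i j, i ≠ j → (∫ ω, (H ω i j) ^ 2 ∂P) = ((σ / (N : ℝ) : ℝ) : ℂ)

/-- All moments finite, uniformly in `N, i, j` (Definition (iii)'). -/
def AllMomentsBound (Ω : ℕ → Type) [∀ N, MeasurableSpace (Ω N)]
    (P : ∀ N, Measure (Ω N)) (H : ∀ N, Ω N → Matrix (Fin N) (Fin N) ℂ) : Prop :=
  (∀ (p : ℕ) (N : ℕ) (i j : Fin N), MemLp (fun ω => H N ω i j) p (P N)) ∧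
    ∀ p : ℕ, ∃ Cp : ℝ, ∀ (N : ℕ) (i j : Fin N),
      (∫ ω, ‖(Real.sqrt N : ℂ) * H N ω i j‖ ^ p ∂(P N)) ≤ Cp

/-- Convergence in distribution of real random variables, tested against
bounded continuous functions. -/
def TendstoInDistribution {Ω : ℕ → Type} [∀ N, MeasurableSpace (Ω N)]
    (P : ∀ N, Measure (Ω N)) (X : ∀ N, Ω N → ℝ) (μ : Measure ℝ) : Prop :=
  ∀ g : BoundedContinuousFunction ℝ ℝ,
    Tendsto (fun N => ∫ ω, g (X N ω) ∂(P N)) atTop (𝓝 (∫ x, g x ∂μ))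



def myW (s : ℝ) (x : ℝ) : ℝ := (1 + |x|) ^ (-(1 + s))

def myPhi (u : ℝ) : ℝ := (1 + |u|) ^ (-(2:ℝ))

lemma myW_pos (s x : ℝ) : 0 < myW s x := by unfold myW; positivity

lemma myPhi_pos (u : ℝ) : 0 < myPhi u := by unfold myPhi; positivity

lemma myW_le_one {s : ℝ} (hs : 0 < s) (x : ℝ) : myW s x ≤ 1 :=
  Real.rpow_le_one_of_one_le_of_nonpos (by simp [abs_nonneg]) (by linarith)

lemma myPhi_quarter {u : ℝ} (hu : |u| ≤ 1) : 1/4 ≤ myPhi u := by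
  have h1 : (2:ℝ) ^ (-(2:ℝ)) ≤ (1 + |u|) ^ (-(2:ℝ)) :=
    Real.rpow_le_rpow_of_nonpos (by positivity) (by linarith) (by norm_num)
  have h2 : (2:ℝ) ^ (-(2:ℝ)) = 1/4 := by
    rw [show (-(2:ℝ)) = -((2:ℕ):ℝ) by norm_num, Real.rpow_neg (by norm_num),
      Real.rpow_natCast]
    norm_num
  rw [h2] at h1; exact h1

lemma myPhi_far {u : ℝ} (hu : 1 ≤ |u|) : (u^2)⁻¹ ≤ 4 * myPhi u := by
  have hu0 : u ≠ 0 := by intro h; rw [h] at hu; norm_num at hu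
  have h1 : (2 * |u|) ^ (-(2:ℝ)) ≤ (1 + |u|) ^ (-(2:ℝ)) :=
    Real.rpow_le_rpow_of_nonpos (by positivity) (by linarith) (by norm_num)
  have h2 : (2 * |u|) ^ (-(2:ℝ)) = (4 * u^2)⁻¹ := by
    rw [show (-(2:ℝ)) = -((2:ℕ):ℝ) by norm_num, Real.rpow_neg (by positivity),
      Real.rpow_natCast, mul_pow, sq_abs]
    norm_num
  rw [h2] at h1
  have hu2 : (0:ℝ) < u ^ 2 := by positivity
  have : (u^2)⁻¹ = 4 * (4 * u^2)⁻¹ := by field_simp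
  rw [this]
  unfold myPhi
  linarith

lemma myW_integrable {s : ℝ} (hs : 0 < s) : Integrable (myW s) := by
  have := integrable_one_add_norm (E := ℝ) (μ := volume) (r := 1 + s)
    (by simp; linarith)
  exact this

lemma myPhi_integrable : Integrable myPhi := by
  have := integrable_one_add_norm (E := ℝ) (μ := volume) (r := (2:ℝ))
    (by simp)
  exact this

lemma myW_continuous (s : ℝ) : Continuous (myW s) :=
  (continuous_const.add continuous_abs).rpow_const (fun x => Or.inl (by positivity : (1:ℝ) + |x| ≠ 0))

lemma myPhi_continuous : Continuous myPhi :=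
  (continuous_const.add continuous_abs).rpow_const (fun x => Or.inl (by positivity : (1:ℝ) + |x| ≠ 0))


lemma intWW {s : ℝ} (hs : 0 < s) :
    Integrable (fun q : ℝ × ℝ => myW s q.1 * myW s q.2) := by
  rw [MeasureTheory.Measure.volume_eq_prod ℝ ℝ]
  exact (myW_integrable hs).mul_prod (myW_integrable hs)

lemma intPhiW {s : ℝ} (hs : 0 < s) :
    Integrable (fun q : ℝ × ℝ => myPhi (q.1 - q.2) * myW s q.2) := by
  rw [MeasureTheory.Measure.volume_eq_prod ℝ ℝ]
  have hmp := measurePreserving_sub_prod (volume : Measure ℝ) (volume : Measure ℝ)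
  have hmeas : AEStronglyMeasurable (fun p : ℝ × ℝ => myPhi p.1 * myW s p.2)
      ((volume : Measure ℝ).prod volume) :=
    ((myPhi_continuous.comp continuous_fst).mul
      ((myW_continuous s).comp continuous_snd)).aestronglyMeasurable
  have := (hmp.integrable_comp hmeas).2
    (myPhi_integrable.mul_prod (myW_integrable hs))
  exact this

lemma intWPhi {s : ℝ} (hs : 0 < s) :
    Integrable (fun q : ℝ × ℝ => myW s q.1 * myPhi (q.1 - q.2)) := by
  have h : (fun q : ℝ × ℝ => myW s q.1 * myPhi (q.1 - q.2)) =
      (fun p : ℝ × ℝ => myW s p.1 * myPhi p.2) ∘ (fun z : ℝ × ℝ => (z.1, z.2 - z.1)) := by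
    funext q
    simp only [Function.comp, myPhi, abs_sub_comm q.1 q.2]
  rw [h, MeasureTheory.Measure.volume_eq_prod ℝ ℝ]
  have hmp := measurePreserving_prod_sub (volume : Measure ℝ) (volume : Measure ℝ)
  have hmeas : AEStronglyMeasurable (fun p : ℝ × ℝ => myW s p.1 * myPhi p.2)
      ((volume : Measure ℝ).prod volume) :=
    (((myW_continuous s).comp continuous_fst).mul
      (myPhi_continuous.comp continuous_snd)).aestronglyMeasurable
  exact (hmp.integrable_comp hmeas).2 ((myW_integrable hs).mul_prod myPhi_integrable)

lemma decayC_nonneg {s C : ℝ} {f : ℝ → ℝ}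
    (hC : ∀ x, |f x| + |deriv f x| ≤ C * (1 + |x|) ^ (-(1 + s))) : 0 ≤ C := by
  have h := hC 0
  simp only [abs_zero, add_zero, Real.one_rpow, mul_one] at h
  have h1 := abs_nonneg (f 0)
  have h2 := abs_nonneg (deriv f 0)
  linarith

lemma decay_W {s C : ℝ} {f : ℝ → ℝ}
    (hC : ∀ x, |f x| + |deriv f x| ≤ C * (1 + |x|) ^ (-(1 + s))) (x : ℝ) :
    |f x| ≤ C * myW s x := by
  have h := hC x
  have h2 := abs_nonneg (deriv f x)
  unfold myW
  linarith

lemma near_est {s : ℝ} (hs : 0 < s) {f : ℝ → ℝ} (hf1 : ContDiff ℝ 1 f)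
    {C : ℝ} (hC : ∀ x, |f x| + |deriv f x| ≤ C * (1 + |x|) ^ (-(1 + s)))
    {x y : ℝ} (hxy : |x - y| ≤ 1) :
    |f x - f y| ≤ (2 ^ (1 + s) * C) * (myW s x * |x - y|) := by
  have hC0 : 0 ≤ C := decayC_nonneg hC
  have hdiff : ∀ c ∈ Set.uIcc x y, DifferentiableAt ℝ f c :=
    fun c _ => (hf1.differentiable one_ne_zero) c
  have hbound : ∀ c ∈ Set.uIcc x y, ‖deriv f c‖ ≤ 2 ^ (1 + s) * C * myW s x := by
    intro c hc
    have h1 : |c - x| ≤ |y - x| := Set.abs_sub_left_of_mem_uIcc hc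
    have h2 : |y - x| ≤ 1 := by rw [abs_sub_comm]; exact hxy
    have h3 : (1 + |x|) / 2 ≤ 1 + |c| := by
      have h4 := abs_sub_abs_le_abs_sub x c
      have h5 : |x - c| = |c - x| := abs_sub_comm x c
      have h6 := abs_nonneg c
      linarith
    have h5 : |deriv f c| ≤ C * (1 + |c|) ^ (-(1 + s)) := by
      have := hC c
      have := abs_nonneg (f c)
      linarith
    have h6 : (1 + |c|) ^ (-(1 + s)) ≤ ((1 + |x|) / 2) ^ (-(1 + s)) :=
      Real.rpow_le_rpow_of_nonpos (by positivity) h3 (by linarith)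
    have h7 : ((1 + |x|) / 2) ^ (-(1 + s)) = 2 ^ (1 + s) * myW s x := by
      rw [Real.div_rpow (by positivity) (by norm_num : (0:ℝ) ≤ 2),
        Real.rpow_neg (by norm_num : (0:ℝ) ≤ 2)]
      unfold myW
      field_simp
    rw [Real.norm_eq_abs]
    calc |deriv f c| ≤ C * (1 + |c|) ^ (-(1 + s)) := h5
      _ ≤ C * (((1 + |x|) / 2) ^ (-(1 + s))) := mul_le_mul_of_nonneg_left h6 hC0
      _ = 2 ^ (1 + s) * C * myW s x := by rw [h7]; ring
  have hkey := Convex.norm_image_sub_le_of_norm_deriv_le hdiff hbound (convex_uIcc x y)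
    Set.right_mem_uIcc Set.left_mem_uIcc
  rw [Real.norm_eq_abs, Real.norm_eq_abs] at hkey
  calc |f x - f y| ≤ 2 ^ (1 + s) * C * myW s x * |x - y| := hkey
    _ = (2 ^ (1 + s) * C) * (myW s x * |x - y|) := by ring

lemma key_bound {s : ℝ} (hs : 0 < s) {f g : ℝ → ℝ} {Kf Kg : ℝ}
    (hKf0 : 0 ≤ Kf) (hKg0 : 0 ≤ Kg)
    (hnf : ∀ x y : ℝ, |x - y| ≤ 1 → |f x - f y| ≤ Kf * (myW s x * |x - y|))
    (hng : ∀ x y : ℝ, |x - y| ≤ 1 → |g x - g y| ≤ Kg * (myW s x * |x - y|))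
    (hgf : ∀ x y : ℝ, |f x - f y| ≤ Kf * (myW s x + myW s y))
    (hgg : ∀ x y : ℝ, |g x - g y| ≤ Kg * (myW s x + myW s y))
    (x y : ℝ) (hxy : x ≠ y) :
    |f x - f y| * |g x - g y| * (2 / (x - y) ^ 2) ≤
      8 * Kf * Kg * (myW s x * myPhi (x - y) + myPhi (x - y) * myW s y + myW s x * myW s y) := by
  have hd : x - y ≠ 0 := sub_ne_zero.2 hxy
  have hd2 : (0:ℝ) < (x - y) ^ 2 := by positivity
  have ha0 := (myW_pos s x).le
  have hb0 := (myW_pos s y).le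
  have hp0 := (myPhi_pos (x - y)).le
  have ha1 := myW_le_one hs x
  have hb1 := myW_le_one hs y
  set a := myW s x
  set b := myW s y
  set p := myPhi (x - y)
  rcases le_or_gt |x - y| 1 with hle | hgt
  · -- near diagonal
    have h1 := hnf x y hle
    have h2 := hng x y hle
    have hp4 : 1/4 ≤ p := myPhi_quarter hle
    have m1 : |f x - f y| * |g x - g y| ≤ (Kf * (a * |x - y|)) * (Kg * (a * |x - y|)) :=
      mul_le_mul h1 h2 (abs_nonneg _) (by positivity)
    have m2 : |f x - f y| * |g x - g y| * (2 / (x - y) ^ 2) ≤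
        (Kf * (a * |x - y|)) * (Kg * (a * |x - y|)) * (2 / (x - y) ^ 2) :=
      mul_le_mul_of_nonneg_right m1 (by positivity)
    have e1 : (Kf * (a * |x - y|)) * (Kg * (a * |x - y|)) * (2 / (x - y) ^ 2)
        = 2 * (Kf * Kg) * (a * a) := by
      have habs : |x - y| * |x - y| = (x - y) ^ 2 := by rw [← sq_abs]; ring
      calc Kf * (a * |x - y|) * (Kg * (a * |x - y|)) * (2 / (x - y) ^ 2)
          = Kf * Kg * (a * a) * (|x - y| * |x - y| * (2 / (x - y) ^ 2)) := by ring
        _ = 2 * (Kf * Kg) * (a * a) := by rw [habs]; field_simp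
    rw [e1] at m2
    refine le_trans m2 ?_
    nlinarith [mul_nonneg (mul_nonneg hKf0 hKg0) (mul_nonneg hp0 hb0),
      mul_nonneg (mul_nonneg hKf0 hKg0) (mul_nonneg ha0 hb0),
      mul_nonneg (mul_nonneg hKf0 hKg0) (mul_nonneg ha0 (by linarith : (0:ℝ) ≤ 4 * p - 1)),
      mul_nonneg (mul_nonneg hKf0 hKg0) (mul_nonneg ha0 (by linarith : (0:ℝ) ≤ 1 - a))]
  · -- far from diagonal
    have h1 := hgf x y
    have h2 := hgg x y
    have hinv1 : ((x - y) ^ 2)⁻¹ ≤ 1 := by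
      rw [inv_le_one_iff₀]
      right
      nlinarith [sq_abs (x - y)]
    have hinv4 : ((x - y) ^ 2)⁻¹ ≤ 4 * p := myPhi_far hgt.le
    have hinv0 : (0:ℝ) ≤ ((x - y) ^ 2)⁻¹ := by positivity
    have m1 : |f x - f y| * |g x - g y| ≤ (Kf * (a + b)) * (Kg * (a + b)) :=
      mul_le_mul h1 h2 (abs_nonneg _) (by positivity)
    have m2 : |f x - f y| * |g x - g y| * (2 / (x - y) ^ 2) ≤
        (Kf * (a + b)) * (Kg * (a + b)) * (2 * ((x - y) ^ 2)⁻¹) := by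
      rw [div_eq_mul_inv, mul_comm (2:ℝ) (((x-y)^2)⁻¹)] at *
      exact mul_le_mul_of_nonneg_right m1 (by positivity)
    refine le_trans m2 ?_
    have hKK : (0:ℝ) ≤ Kf * Kg := mul_nonneg hKf0 hKg0
    nlinarith [mul_nonneg hKK (mul_nonneg (mul_nonneg ha0 ha0) (by linarith : (0:ℝ) ≤ 4 * p - ((x-y)^2)⁻¹)),
      mul_nonneg hKK (mul_nonneg (mul_nonneg hb0 hb0) (by linarith : (0:ℝ) ≤ 4 * p - ((x-y)^2)⁻¹)),
      mul_nonneg hKK (mul_nonneg (mul_nonneg ha0 hb0) (by linarith : (0:ℝ) ≤ 1 - ((x-y)^2)⁻¹)),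
      mul_nonneg hKK (mul_nonneg ha0 (mul_nonneg hp0 (by linarith : (0:ℝ) ≤ 1 - a))),
      mul_nonneg hKK (mul_nonneg hb0 (mul_nonneg hp0 (by linarith : (0:ℝ) ≤ 1 - b))),
      mul_nonneg hKK (mul_nonneg ha0 hb0),
      mul_nonneg hKK (mul_nonneg ha0 hp0),
      mul_nonneg hKK (mul_nonneg hb0 hp0)]


set_option maxHeartbeats 2000000 in
/-- For `f, g ∈ C^{1,r,s}(ℝ)`, `lim_{μ→∞} V_μ(f,g)` exists and equals
`(1/2)·V₀(f,g)`, which is `(1/(4π²)) ∬ (f(x)−f(y))(g(x)−g(y))/(x−y)² dx dy`. -/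
theorem Vmu_tendsto_atTop
    (r s : ℝ) (hr : 0 < r) (hs : 0 < s)
    (f g : ℝ → ℝ) (hf : MemC1rs r s f) (hg : MemC1rs r s g) :
    Tendsto (fun μ : ℝ => Vmu μ f g) atTop (𝓝 (Vinf f g)) ∧
      Vinf f g = (1 / 2) * Vmu 0 f g := by
  constructor
  · -- convergence
    obtain ⟨Cf, hCf⟩ := hf.decay
    obtain ⟨Cg, hCg⟩ := hg.decay
    have hCf0 : 0 ≤ Cf := decayC_nonneg hCf
    have hCg0 : 0 ≤ Cg := decayC_nonneg hCg
    have h2s : (1:ℝ) ≤ 2 ^ (1 + s) := by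
      have h := Real.rpow_le_rpow_of_exponent_le (by norm_num : (1:ℝ) ≤ 2)
        (by linarith : (0:ℝ) ≤ 1 + s)
      simpa using h
    set Kf := 2 ^ (1 + s) * Cf with hKfdef
    set Kg := 2 ^ (1 + s) * Cg with hKgdef
    have hKf0 : 0 ≤ Kf := by positivity
    have hKg0 : 0 ≤ Kg := by positivity
    have hCfKf : Cf ≤ Kf := by nlinarith
    have hCgKg : Cg ≤ Kg := by nlinarith
    have hnf : ∀ x y : ℝ, |x - y| ≤ 1 → |f x - f y| ≤ Kf * (myW s x * |x - y|) :=
      fun x y h => near_est hs hf.c1 hCf h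
    have hng : ∀ x y : ℝ, |x - y| ≤ 1 → |g x - g y| ≤ Kg * (myW s x * |x - y|) :=
      fun x y h => near_est hs hg.c1 hCg h
    have habs : ∀ (h : ℝ → ℝ) (x y : ℝ), |h x - h y| ≤ |h x| + |h y| := by
      intro h x y
      have := abs_add_le (h x) (-(h y))
      rw [abs_neg] at this
      simpa [sub_eq_add_neg] using this
    have hgf : ∀ x y : ℝ, |f x - f y| ≤ Kf * (myW s x + myW s y) := by
      intro x y
      have h1 := decay_W hCf x
      have h2 := decay_W hCf y
      have h3 := habs f x y
      have h4 := (myW_pos s x).le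
      have h5 := (myW_pos s y).le
      nlinarith
    have hgg : ∀ x y : ℝ, |g x - g y| ≤ Kg * (myW s x + myW s y) := by
      intro x y
      have h1 := decay_W hCg x
      have h2 := decay_W hCg y
      have h3 := habs g x y
      have h4 := (myW_pos s x).le
      have h5 := (myW_pos s y).le
      nlinarith
    -- the dominating function
    have hBint : Integrable (fun q : ℝ × ℝ => 8 * Kf * Kg *
        (myW s q.1 * myPhi (q.1 - q.2) + myPhi (q.1 - q.2) * myW s q.2 +
          myW s q.1 * myW s q.2)) :=
      (((intWPhi hs).add (intPhiW hs)).add (intWW hs)).const_mul (8 * Kf * Kg)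
    have hB0 : ∀ q : ℝ × ℝ, 0 ≤ 8 * Kf * Kg *
        (myW s q.1 * myPhi (q.1 - q.2) + myPhi (q.1 - q.2) * myW s q.2 +
          myW s q.1 * myW s q.2) := by
      intro q
      have h1 := (myW_pos s q.1).le
      have h2 := (myW_pos s q.2).le
      have h3 := (myPhi_pos (q.1 - q.2)).le
      have h4 : (0:ℝ) ≤ 8 * Kf * Kg := by positivity
      nlinarith [mul_nonneg h1 h3, mul_nonneg h3 h2, mul_nonneg h1 h2]
    -- measurability
    have hfm : Measurable f := hf.c1.continuous.measurable
    have hgm : Measurable g := hg.c1.continuous.measurable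
    have hmd : Measurable fun q : ℝ × ℝ => q.1 - q.2 := measurable_fst.sub measurable_snd
    have hmeas : ∀ μ : ℝ, AEStronglyMeasurable (fun q : ℝ × ℝ =>
        (f q.1 - f q.2) * (g q.1 - g q.2) *
          (1 / (q.1 - q.2) ^ 2 + ((q.1 - q.2) ^ 2 - μ ^ 2) / ((q.1 - q.2) ^ 2 + μ ^ 2) ^ 2))
        volume := by
      intro μ
      refine Measurable.aestronglyMeasurable ?_
      exact (((hfm.comp measurable_fst).sub (hfm.comp measurable_snd)).mul
        ((hgm.comp measurable_fst).sub (hgm.comp measurable_snd))).mul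
        ((measurable_const.div (hmd.pow_const 2)).add
          (((hmd.pow_const 2).sub measurable_const).div
            (((hmd.pow_const 2).add measurable_const).pow_const 2)))
    -- uniform bound
    have hbound : ∀ μ : ℝ, ∀ q : ℝ × ℝ,
        ‖(f q.1 - f q.2) * (g q.1 - g q.2) *
          (1 / (q.1 - q.2) ^ 2 + ((q.1 - q.2) ^ 2 - μ ^ 2) / ((q.1 - q.2) ^ 2 + μ ^ 2) ^ 2)‖ ≤
        8 * Kf * Kg * (myW s q.1 * myPhi (q.1 - q.2) + myPhi (q.1 - q.2) * myW s q.2 +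
          myW s q.1 * myW s q.2) := by
      intro μ q
      obtain ⟨x, y⟩ := q
      simp only [Real.norm_eq_abs]
      rcases eq_or_ne x y with he | hne
      · subst he
        simpa [sub_self] using hB0 (x, x)
      · have hd : x - y ≠ 0 := sub_ne_zero.2 hne
        have hd2 : (0:ℝ) < (x - y) ^ 2 := by positivity
        have hdm : (0:ℝ) < (x - y) ^ 2 + μ ^ 2 := by positivity
        have e1 : |(x - y) ^ 2 - μ ^ 2| ≤ (x - y) ^ 2 + μ ^ 2 :=
          abs_le.2 ⟨by nlinarith [sq_nonneg μ], by nlinarith [sq_nonneg μ]⟩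
        have hk : |1 / (x - y) ^ 2 + ((x - y) ^ 2 - μ ^ 2) / ((x - y) ^ 2 + μ ^ 2) ^ 2| ≤
            2 / (x - y) ^ 2 := by
          calc |1 / (x - y) ^ 2 + ((x - y) ^ 2 - μ ^ 2) / ((x - y) ^ 2 + μ ^ 2) ^ 2|
              ≤ |1 / (x - y) ^ 2| + |((x - y) ^ 2 - μ ^ 2) / ((x - y) ^ 2 + μ ^ 2) ^ 2| :=
                abs_add_le _ _
            _ ≤ 1 / (x - y) ^ 2 + 1 / (x - y) ^ 2 := by
                apply add_le_add
                · rw [abs_of_pos (by positivity)]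
                · rw [abs_div, abs_of_pos (by positivity : (0:ℝ) < ((x - y) ^ 2 + μ ^ 2) ^ 2),
                    div_le_div_iff₀ (by positivity) hd2]
                  nlinarith [mul_le_mul_of_nonneg_right e1 hd2.le, sq_nonneg μ]
            _ = 2 / (x - y) ^ 2 := by ring
        rw [abs_mul, abs_mul]
        refine le_trans (mul_le_mul_of_nonneg_left hk (by positivity)) ?_
        exact key_bound hs hKf0 hKg0 hnf hng hgf hgg x y hne
    -- pointwise limit
    have hlim : ∀ q : ℝ × ℝ, Tendsto (fun μ : ℝ =>
        (f q.1 - f q.2) * (g q.1 - g q.2) *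
          (1 / (q.1 - q.2) ^ 2 + ((q.1 - q.2) ^ 2 - μ ^ 2) / ((q.1 - q.2) ^ 2 + μ ^ 2) ^ 2))
        atTop (𝓝 ((f q.1 - f q.2) * (g q.1 - g q.2) / (q.1 - q.2) ^ 2)) := by
      intro q
      obtain ⟨x, y⟩ := q
      rcases eq_or_ne x y with he | hne
      · subst he
        simp [sub_self]
      · have hd : x - y ≠ 0 := sub_ne_zero.2 hne
        have hd2 : (0:ℝ) < (x - y) ^ 2 := by positivity
        have h0 : Tendsto (fun μ : ℝ =>
            ((x - y) ^ 2 - μ ^ 2) / ((x - y) ^ 2 + μ ^ 2) ^ 2) atTop (𝓝 0) := by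
          apply squeeze_zero_norm' (a := fun μ : ℝ => (μ ^ 2)⁻¹)
          · filter_upwards [eventually_ge_atTop (1:ℝ)] with μ hμ
            have hμ2 : (0:ℝ) < μ ^ 2 := by nlinarith
            have hdm : (0:ℝ) < (x - y) ^ 2 + μ ^ 2 := by positivity
            have e1 : |(x - y) ^ 2 - μ ^ 2| ≤ (x - y) ^ 2 + μ ^ 2 :=
              abs_le.2 ⟨by nlinarith, by nlinarith⟩
            rw [Real.norm_eq_abs, abs_div,
              abs_of_pos (by positivity : (0:ℝ) < ((x - y) ^ 2 + μ ^ 2) ^ 2),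
              div_le_iff₀ (by positivity)]
            have h2 : (x - y) ^ 2 + μ ^ 2 ≤ (μ ^ 2)⁻¹ * ((x - y) ^ 2 + μ ^ 2) ^ 2 := by
              rw [inv_mul_eq_div, le_div_iff₀ hμ2]
              nlinarith [mul_le_mul_of_nonneg_left
                (show μ ^ 2 ≤ (x - y) ^ 2 + μ ^ 2 by nlinarith) hdm.le]
            linarith
          · have : Tendsto (fun μ : ℝ => μ ^ 2) atTop atTop :=
              tendsto_pow_atTop (by norm_num)
            exact this.inv_tendsto_atTop
        have hmul := ((tendsto_const_nhds (α := ℝ) (x := 1 / (x - y) ^ 2)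
            (f := atTop (α := ℝ))).add h0).const_mul ((f x - f y) * (g x - g y))
        have heq : (f x - f y) * (g x - g y) / (x - y) ^ 2 =
            (f x - f y) * (g x - g y) * (1 / (x - y) ^ 2 + 0) := by ring
        rw [heq]
        exact hmul
    have hmain : Tendsto (fun μ : ℝ => ∫ q : ℝ × ℝ,
        (f q.1 - f q.2) * (g q.1 - g q.2) *
          (1 / (q.1 - q.2) ^ 2 + ((q.1 - q.2) ^ 2 - μ ^ 2) / ((q.1 - q.2) ^ 2 + μ ^ 2) ^ 2))
        atTop (𝓝 (∫ q : ℝ × ℝ, (f q.1 - f q.2) * (g q.1 - g q.2) / (q.1 - q.2) ^ 2)) := by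
      apply tendsto_integral_filter_of_dominated_convergence
        (bound := fun q : ℝ × ℝ => 8 * Kf * Kg *
          (myW s q.1 * myPhi (q.1 - q.2) + myPhi (q.1 - q.2) * myW s q.2 +
            myW s q.1 * myW s q.2))
      · exact Eventually.of_forall hmeas
      · exact Eventually.of_forall fun μ => ae_of_all _ (hbound μ)
      · exact hBint
      · exact ae_of_all _ hlim
    simp only [Vmu, Vinf]
    exact hmain.const_mul _
  · -- the identity Vinf = (1/2) Vmu 0
    have hfun : ∀ q : ℝ × ℝ,
        (f q.1 - f q.2) * (g q.1 - g q.2) *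
          (1 / (q.1 - q.2) ^ 2 +
            ((q.1 - q.2) ^ 2 - (0:ℝ) ^ 2) / ((q.1 - q.2) ^ 2 + (0:ℝ) ^ 2) ^ 2) =
        2 * ((f q.1 - f q.2) * (g q.1 - g q.2) / (q.1 - q.2) ^ 2) := by
      intro q
      rcases eq_or_ne q.1 q.2 with he | hne
      · rw [he]
        simp
      · have hd : q.1 - q.2 ≠ 0 := sub_ne_zero.2 hne
        field_simp
        ring
    have h2 : (∫ q : ℝ × ℝ, (f q.1 - f q.2) * (g q.1 - g q.2) *
          (1 / (q.1 - q.2) ^ 2 +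
            ((q.1 - q.2) ^ 2 - (0:ℝ) ^ 2) / ((q.1 - q.2) ^ 2 + (0:ℝ) ^ 2) ^ 2)) =
        2 * ∫ q : ℝ × ℝ, (f q.1 - f q.2) * (g q.1 - g q.2) / (q.1 - q.2) ^ 2 := by
      rw [← integral_const_mul]
      exact integral_congr_ae (Eventually.of_forall hfun)
    simp only [Vinf, Vmu]
    rw [h2]
    ring
end
end

section
/- Let N ≥ 1, let σ ∈ [−1,1], and let h be a complex-valued random variable with E h = 0, E|h|² = 1/N, E h² = σ/N, and E|√N h|⁴ ≤ C₄ for some constant C₄ > 0. Then there is a constant K, depending only on C₄, such that for all p, p' ∈ {0,1,2,3}: |E[h^p h̄^{3−p}] − E[h^{p'} h̄^{3−p'}]| ≤ K · N^{−3/2} · √(1−σ). -/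
open MeasureTheory ProbabilityTheory

noncomputable section

private lemma aux_rpow2 (x : ℝ) : x ^ (2:ℝ) = x ^ (2:ℕ) := by
  rw [show (2:ℝ) = ((2:ℕ):ℝ) by norm_num]; exact Real.rpow_natCast x 2

private lemma aux_rpow3 (x : ℝ) : x ^ (3:ℝ) = x ^ (3:ℕ) := by
  rw [show (3:ℝ) = ((3:ℕ):ℝ) by norm_num]; exact Real.rpow_natCast x 3

private lemma aux_rpow4 (x : ℝ) : x ^ (4:ℝ) = x ^ (4:ℕ) := by
  rw [show (4:ℝ) = ((4:ℕ):ℝ) by norm_num]; exact Real.rpow_natCast x 4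

/-- Third-moment (cumulant) comparison: if `E h = 0`, `E|h|² = 1/N`,
`E h² = σ/N` and `E|√N h|⁴ ≤ C₄`, then there is a constant `K`, depending only on `C₄`,
with `|E[h^p h̄^{3−p}] − E[h^{p'} h̄^{3−p'}]| ≤ K N^{−3/2} √(1−σ)` for all
`p, p' ∈ {0,1,2,3}`. -/
theorem third_cumulant_comparison (C₄ : ℝ) (hC₄ : 0 < C₄) :
    ∃ K : ℝ, ∀ (Ω : Type) (_ : MeasurableSpace Ω) (P : Measure Ω),
      IsProbabilityMeasure P →
      ∀ (N : ℕ), 1 ≤ N → ∀ σ : ℝ, σ ∈ Set.Icc (-1 : ℝ) 1 →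
      ∀ h : Ω → ℂ, MemLp h 4 P →
      (∫ ω, h ω ∂P) = 0 →
      (∫ ω, ‖h ω‖ ^ 2 ∂P) = 1 / (N : ℝ) →
      (∫ ω, h ω ^ 2 ∂P) = ((σ / (N : ℝ) : ℝ) : ℂ) →
      (∫ ω, ‖(Real.sqrt N : ℂ) * h ω‖ ^ 4 ∂P) ≤ C₄ →
      ∀ p p' : ℕ, p ≤ 3 → p' ≤ 3 →
        ‖(∫ ω, h ω ^ p * (starRingEnd ℂ (h ω)) ^ (3 - p) ∂P) -
            ∫ ω, h ω ^ p' * (starRingEnd ℂ (h ω)) ^ (3 - p') ∂P‖ ≤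
          K * (N : ℝ) ^ (-(3 : ℝ) / 2) * Real.sqrt (1 - σ) := by
  refine ⟨3 * (Real.sqrt 2 * Real.sqrt C₄), ?_⟩
  intro Ω mΩ P hP N hN σ hσ h hL4 _hE0 hEabs2 hEsq hE4 p p' hp hp'
  have hN0 : (0:ℝ) < (N:ℝ) := by exact_mod_cast hN
  have h1σ : (0:ℝ) ≤ 1 - σ := by linarith [hσ.2]
  have hasm : AEStronglyMeasurable h P := hL4.1
  have hmem2 : MemLp h 2 P := hL4.mono_exponent (by norm_num)
  have hmem3 : MemLp h 3 P := hL4.mono_exponent (by norm_num)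
  -- `|h|²` is in L²
  have hmemabs2 : MemLp (fun ω => ‖h ω‖ ^ 2) 2 P := by
    have h42 : (4:ENNReal)/2 = 2 :=
      ((ENNReal.eq_div_iff (by norm_num) (by norm_num)).mpr (by norm_num)).symm
    have hmm := hL4.norm_rpow_div 2
    rw [h42] at hmm
    refine hmm.ae_eq ?_
    filter_upwards with ω
    rw [ENNReal.toReal_ofNat, aux_rpow2 ‖h ω‖]
  have hmemim : MemLp (fun ω => (h ω).im) 2 P := by
    simpa [RCLike.im_eq_complex_im] using hmem2.im
  -- integrability facts
  have hint4 : Integrable (fun ω => ‖h ω‖ ^ 4) P := by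
    have hmm := hL4.integrable_norm_rpow (by norm_num) (by norm_num)
    refine hmm.congr ?_
    filter_upwards with ω
    rw [ENNReal.toReal_ofNat, aux_rpow4 ‖h ω‖]
  have hintabs2 : Integrable (fun ω => ‖h ω‖ ^ 2) P :=
    hmemabs2.integrable (by norm_num)
  have hintim2 : Integrable (fun ω => (h ω).im ^ 2) P := by
    have hmm := hmemim.integrable_norm_rpow (by norm_num) (by norm_num)
    refine hmm.congr ?_
    filter_upwards with ω
    rw [ENNReal.toReal_ofNat, aux_rpow2 ‖(h ω).im‖, Real.norm_eq_abs]
    simp [sq_abs]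
  have hintsqc : Integrable (fun ω => h ω ^ 2) P := by
    refine hintabs2.mono' (hasm.pow 2) ?_
    filter_upwards with ω
    simp
  -- `E (Im h)² = (1-σ)/(2N)`
  have hre : ∫ ω, (h ω ^ 2).re ∂P = σ / N := by
    have e := integral_re (𝕜 := ℂ) hintsqc
    rw [hEsq] at e
    simpa [RCLike.re_eq_complex_re] using e
  have hintre : Integrable (fun ω => (h ω ^ 2).re) P := by
    have := hintsqc.re
    simpa [RCLike.re_eq_complex_re] using this
  have him2 : ∫ ω, (h ω).im ^ 2 ∂P = (1 - σ) / (2*N) := by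
    have hcongr : ∫ ω, (h ω).im ^ 2 ∂P
        = ∫ ω, (‖h ω‖ ^ 2 - (h ω ^ 2).re) / 2 ∂P := by
      refine integral_congr_ae ?_
      filter_upwards with ω
      have hsq : (h ω ^ 2).re = (h ω).re * (h ω).re - (h ω).im * (h ω).im := by
        rw [pow_two, Complex.mul_re]
      rw [Complex.sq_norm, Complex.normSq_apply, hsq]
      ring
    rw [hcongr, integral_div, integral_sub hintabs2 hintre, hEabs2, hre,
      div_sub_div_same, div_div, mul_comm (N:ℝ) 2]
  -- `E |h|⁴ ≤ C₄ / N²`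
  have hI4 : ∫ ω, ‖h ω‖ ^ 4 ∂P ≤ C₄ / (N:ℝ)^2 := by
    have hmul : (N:ℝ)^2 * ∫ ω, ‖h ω‖ ^ 4 ∂P ≤ C₄ := by
      rw [← integral_const_mul]
      calc ∫ ω, (N:ℝ)^2 * ‖h ω‖ ^ 4 ∂P
          = ∫ ω, ‖(Real.sqrt N : ℂ) * h ω‖ ^ 4 ∂P := by
            refine integral_congr_ae ?_
            filter_upwards with ω
            rw [norm_mul, Complex.norm_real, Real.norm_eq_abs, abs_of_nonneg (Real.sqrt_nonneg _), mul_pow]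
            congr 1
            rw [show (4:ℕ) = 2*2 from rfl, pow_mul, Real.sq_sqrt hN0.le]
        _ ≤ C₄ := hE4
    rw [le_div_iff₀ (by positivity)]
    linarith [hmul]
  -- Cauchy–Schwarz
  have hCS : ∫ ω, ‖h ω‖ ^ 2 * |(h ω).im| ∂P ≤
      Real.sqrt (C₄ / (N:ℝ)^2) * Real.sqrt ((1-σ)/(2*N)) := by
    have hconj : Real.HolderConjugate 2 2 := Real.HolderConjugate.two_two
    have hf2 : MemLp (fun ω => ‖h ω‖ ^ 2) (ENNReal.ofReal 2) P := by
      simpa [ENNReal.ofReal_ofNat] using hmemabs2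
    have hg2 : MemLp (fun ω => (h ω).im) (ENNReal.ofReal 2) P := by
      simpa [ENNReal.ofReal_ofNat] using hmemim
    have H := MeasureTheory.integral_mul_norm_le_Lp_mul_Lq (μ := P) hconj hf2 hg2
    have e1 : ∫ a, ‖‖h a‖ ^ 2‖ * ‖(h a).im‖ ∂P
        = ∫ ω, ‖h ω‖ ^ 2 * |(h ω).im| ∂P := by
      refine integral_congr_ae ?_
      filter_upwards with ω
      rw [Real.norm_eq_abs, Real.norm_eq_abs, abs_of_nonneg (by positivity)]
    have e2 : ∫ a, ‖‖h a‖ ^ 2‖ ^ (2:ℝ) ∂P = ∫ ω, ‖h ω‖ ^ 4 ∂P := by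
      refine integral_congr_ae ?_
      filter_upwards with ω
      rw [Real.norm_eq_abs, abs_of_nonneg (by positivity),
        aux_rpow2 (‖h ω‖ ^ 2), ← pow_mul]
    have e3 : ∫ a, ‖(h a).im‖ ^ (2:ℝ) ∂P = ∫ ω, (h ω).im ^ 2 ∂P := by
      refine integral_congr_ae ?_
      filter_upwards with ω
      rw [Real.norm_eq_abs, aux_rpow2 |(h ω).im|]
      simp [sq_abs]
    rw [e1, e2, e3] at H
    refine H.trans ?_
    rw [← Real.sqrt_eq_rpow, ← Real.sqrt_eq_rpow, him2]
    exact mul_le_mul_of_nonneg_right (Real.sqrt_le_sqrt hI4) (Real.sqrt_nonneg _)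
  -- arithmetic identity
  set B : ℝ := Real.sqrt 2 * Real.sqrt C₄ * (N:ℝ) ^ (-(3:ℝ)/2) * Real.sqrt (1-σ) with hBdef
  have hB0 : 0 ≤ B := by positivity
  have hN32 : (N:ℝ) ^ (-(3:ℝ)/2) = ((N:ℝ) * Real.sqrt N)⁻¹ := by
    rw [show (-(3:ℝ)/2) = -(3/2) by ring, Real.rpow_neg hN0.le]
    congr 1
    rw [show ((3:ℝ)/2) = 1 + 1/2 by norm_num, Real.rpow_add hN0, Real.rpow_one,
      ← Real.sqrt_eq_rpow]
  have hBeq : 2 * (Real.sqrt (C₄ / (N:ℝ)^2) * Real.sqrt ((1-σ)/(2*N))) = B := by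
    have hs2 : (0:ℝ) < Real.sqrt 2 := Real.sqrt_pos.mpr (by norm_num)
    have hsN : (0:ℝ) < Real.sqrt N := Real.sqrt_pos.mpr hN0
    have h22 : Real.sqrt 2 * Real.sqrt 2 = 2 := Real.mul_self_sqrt (by norm_num)
    rw [hBdef, hN32, Real.sqrt_div hC₄.le, Real.sqrt_sq hN0.le,
      Real.sqrt_div h1σ, Real.sqrt_mul (by norm_num : (0:ℝ) ≤ 2), ← h22]
    field_simp
    rw [Real.sqrt_sq hs2.le]
    ring
  -- integrability of mixed third moments
  have hintF : ∀ q : ℕ, q ≤ 3 →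
      Integrable (fun ω => h ω ^ q * (starRingEnd ℂ (h ω)) ^ (3 - q)) P := by
    intro q hq
    have hint3 : Integrable (fun ω => ‖h ω‖ ^ 3) P := by
      have hmm := hmem3.integrable_norm_rpow (by norm_num) (by norm_num)
      refine hmm.congr ?_
      filter_upwards with ω
      rw [ENNReal.toReal_ofNat, aux_rpow3 ‖h ω‖]
    have hasm' : AEStronglyMeasurable (fun ω => h ω ^ q * (starRingEnd ℂ (h ω)) ^ (3 - q)) P :=
      (hasm.pow q).mul ((Complex.continuous_conj.comp_aestronglyMeasurable hasm).pow (3 - q))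
    refine hint3.mono' hasm' ?_
    filter_upwards with ω
    rw [norm_mul, norm_pow, norm_pow, RCLike.norm_conj, ← pow_add, Nat.add_sub_cancel' hq]
  -- one-step estimate
  have hstep : ∀ q : ℕ, q ≤ 2 →
      ‖(∫ ω, h ω ^ q * (starRingEnd ℂ (h ω)) ^ (3 - q) ∂P) -
        ∫ ω, h ω ^ (q+1) * (starRingEnd ℂ (h ω)) ^ (3 - (q+1)) ∂P‖ ≤ B := by
    intro q hq
    rw [← integral_sub (hintF q (by omega)) (hintF (q+1) (by omega))]
    have hpt : ∀ ω : Ω, ‖h ω ^ q * (starRingEnd ℂ (h ω)) ^ (3 - q)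
        - h ω ^ (q+1) * (starRingEnd ℂ (h ω)) ^ (3 - (q+1))‖
        = 2 * (‖h ω‖ ^ 2 * |(h ω).im|) := by
      intro ω
      have e1 : 3 - q = (2 - q) + 1 := by omega
      have e2 : 3 - (q + 1) = 2 - q := by omega
      have e3 : h ω ^ q * (starRingEnd ℂ (h ω)) ^ (3 - q)
          - h ω ^ (q+1) * (starRingEnd ℂ (h ω)) ^ (3 - (q+1))
          = h ω ^ q * (starRingEnd ℂ (h ω)) ^ (2 - q) * ((starRingEnd ℂ (h ω)) - h ω) := by
        rw [e1, e2]
        ring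
      have e4 : (starRingEnd ℂ (h ω)) - h ω = ((-2 * (h ω).im : ℝ) : ℂ) * Complex.I := by
        apply Complex.ext <;> simp <;> ring
      rw [e3, norm_mul, norm_mul, norm_pow, norm_pow, Complex.norm_conj, ← pow_add,
        Nat.add_sub_cancel' (by omega : q ≤ 2), e4, norm_mul, Complex.norm_real, Real.norm_eq_abs,
        Complex.norm_I, mul_one, abs_mul]
      rw [abs_neg, abs_two]
      ring
    calc ‖∫ ω, (h ω ^ q * (starRingEnd ℂ (h ω)) ^ (3 - q)
            - h ω ^ (q+1) * (starRingEnd ℂ (h ω)) ^ (3 - (q+1))) ∂P‖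
        ≤ ∫ ω, ‖h ω ^ q * (starRingEnd ℂ (h ω)) ^ (3 - q)
            - h ω ^ (q+1) * (starRingEnd ℂ (h ω)) ^ (3 - (q+1))‖ ∂P := by
          simpa using
            norm_integral_le_integral_norm (μ := P)
              (f := fun ω => h ω ^ q * (starRingEnd ℂ (h ω)) ^ (3 - q)
                - h ω ^ (q+1) * (starRingEnd ℂ (h ω)) ^ (3 - (q+1)))
      _ = ∫ ω, 2 * (‖h ω‖ ^ 2 * |(h ω).im|) ∂P := by
          refine integral_congr_ae ?_
          filter_upwards with ω
          exact hpt ω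
      _ = 2 * ∫ ω, ‖h ω‖ ^ 2 * |(h ω).im| ∂P := by
          exact integral_const_mul 2 _
      _ ≤ 2 * (Real.sqrt (C₄ / (N:ℝ)^2) * Real.sqrt ((1-σ)/(2*N))) := by linarith [hCS]
      _ = B := hBeq
  -- telescoping
  have key : ∀ (g : ℕ → ℂ), (∀ q : ℕ, q ≤ 2 → ‖g q - g (q+1)‖ ≤ B) →
      ∀ a b : ℕ, a ≤ 3 → b ≤ 3 → ‖g a - g b‖ ≤ 3 * B := by
    intro g hg a b ha hb
    have h01 := hg 0 (by norm_num)
    have h12 := hg 1 (by norm_num)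
    have h23 := hg 2 (by norm_num)
    have t : ∀ x y z : ℂ, ‖x - z‖ ≤ ‖x - y‖ + ‖y - z‖ :=
      fun x y z => norm_sub_le_norm_sub_add_norm_sub x y z
    have hsymm : ∀ x y : ℂ, ‖x - y‖ = ‖y - x‖ := by
      intro x y
      rw [norm_sub_rev]
    interval_cases a <;> interval_cases b <;>
      first
        | (simp only [sub_self, norm_zero]; positivity)
        | linarith [h01, h12, h23, hB0, t (g 0) (g 1) (g 2), t (g 0) (g 1) (g 3),
            t (g 1) (g 2) (g 3), t (g 0) (g 2) (g 3),
            hsymm (g 0) (g 1), hsymm (g 0) (g 2), hsymm (g 0) (g 3),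
            hsymm (g 1) (g 2), hsymm (g 1) (g 3), hsymm (g 2) (g 3)]
  have hfin := key (fun q => ∫ ω, h ω ^ q * (starRingEnd ℂ (h ω)) ^ (3 - q) ∂P) hstep p p' hp hp'
  calc ‖(∫ ω, h ω ^ p * (starRingEnd ℂ (h ω)) ^ (3 - p) ∂P) -
          ∫ ω, h ω ^ p' * (starRingEnd ℂ (h ω)) ^ (3 - p') ∂P‖ ≤ 3 * B := hfin
    _ = 3 * (Real.sqrt 2 * Real.sqrt C₄) * (N:ℝ) ^ (-(3:ℝ)/2) * Real.sqrt (1-σ) := by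
        rw [hBdef]; ring

end
end
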